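/- Let weighted fundamental graph data with a set S be given and let Q : V* → ℝ be a potential. For θ ∈ ℝ^d let M(θ) be the ν×ν Hermitian matrix acting on f : V* → ℂ by (M(θ)f)(v) = κ̃_v f(v) − Σ_{e : o(e)=v} (m_A(e)/√(m_V(v) m_V(t(e)))) exp(iΦ(e,θ)) f(t(e)), where κ̃_v = (1/m_V(v)) Σ_{e : o(e)=v} m_A(e) (M(θ) is similar, via the positive diagonal matrix diag(√m_V), to the weighted fiber magnetic Laplacian). Let λ_1(θ) ≤ … ≤ λ_ν(θ) be the eigenvalues of M(θ) + diag(Q) and σ_n = [inf_θ λ_n(θ), sup_θ λ_n(θ)] the spectral bands. Then Σ_{n=1}^ν |σ_n| ≤ 2β̂, where β̂ = Σ_{e ∈ S∪S̄} m_A(e)/√(m_V(o(e)) m_V(t(e))); consequently the Lebesgue measure of ⋃_n σ_n (the spectrum of the weighted magnetic Schrödinger operator) is at most 2β̂. -/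

import Mathlib

open scoped BigOperators
open Matrix Polynomial
open scoped InnerProductSpace

set_option maxRecDepth 4000
set_option maxHeartbeats 1000000

noncomputable section


/-- Phase `Φ(e,θ) = α(e) + ⟨τ(e), θ⟩` of an edge. -/
def edgePhase {E : Type*} {d : ℕ} (α : E → ℝ) (τ : E → Fin d → ℤ)
    (θ : Fin d → ℝ) (e : E) : ℝ :=
  α e + ∑ j, (τ e j : ℝ) * θ j

/-- Weighted degree `κ̃_v = (1/m_V(v)) ∑_{e : o e = v} m_A(e)`. -/
def wDeg {E : Type*} [Fintype E] {ν : ℕ} (o : E → Fin ν)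
    (mV : Fin ν → ℝ) (mA : E → ℝ) (v : Fin ν) : ℝ :=
  (mV v)⁻¹ * ∑ e ∈ Finset.univ.filter (fun e => o e = v), mA e

/-- The symmetrized weighted fiber magnetic Laplacian:
`(M(θ)f)(v) = κ̃_v f(v) − ∑_{e : o e = v} (m_A(e)/√(m_V(v) m_V(t e))) exp(iΦ(e,θ)) f(t e)`. -/
def wFiberLap {E : Type*} [Fintype E] {d ν : ℕ} (o t : E → Fin ν)
    (τ : E → Fin d → ℤ) (α : E → ℝ) (mV : Fin ν → ℝ) (mA : E → ℝ)
    (θ : Fin d → ℝ) : Matrix (Fin ν) (Fin ν) ℂ :=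
  fun v u => (wDeg o mV mA v : ℂ) * (if v = u then 1 else 0)
    - ∑ e ∈ Finset.univ.filter (fun e => o e = v ∧ t e = u),
        ((mA e / Real.sqrt (mV v * mV u) : ℝ) : ℂ)
          * Complex.exp (Complex.I * (edgePhase α τ θ e : ℝ))

namespace BandAux
variable {ν : ℕ}

/-- sorted eigenvalues of a Hermitian matrix -/
def sortedEig {A : Matrix (Fin ν) (Fin ν) ℂ} (hA : A.IsHermitian) : Fin ν → ℝ :=
  hA.eigenvalues ∘ Tuple.sort hA.eigenvalues

lemma sortedEig_monotone {A : Matrix (Fin ν) (Fin ν) ℂ} (hA : A.IsHermitian) :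
    Monotone (sortedEig hA) := Tuple.monotone_sort _

lemma charpoly_conj_unitary (U : Matrix.unitaryGroup (Fin ν) ℂ)
    (D : Matrix (Fin ν) (Fin ν) ℂ) :
    ((U : Matrix (Fin ν) (Fin ν) ℂ) * D * star (U : Matrix (Fin ν) (Fin ν) ℂ)).charpoly
      = D.charpoly := by
  set Um := (U : Matrix (Fin ν) (Fin ν) ℂ)
  have hUU : Um * star Um = 1 := Matrix.mem_unitaryGroup_iff.mp U.2
  have hUU' : star Um * Um = 1 := Matrix.mem_unitaryGroup_iff'.mp U.2
  have hmap : ∀ (A B : Matrix (Fin ν) (Fin ν) ℂ),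
      (C : ℂ →+* ℂ[X]).mapMatrix (A * B)
        = (C : ℂ →+* ℂ[X]).mapMatrix A * (C : ℂ →+* ℂ[X]).mapMatrix B := by
    intro A B; exact RingHom.map_mul _ _ _
  have h1 : charmatrix (Um * D * star Um)
      = (C : ℂ →+* ℂ[X]).mapMatrix Um * charmatrix D
          * (C : ℂ →+* ℂ[X]).mapMatrix (star Um) := by
    rw [charmatrix, charmatrix]
    rw [Matrix.mul_sub, Matrix.sub_mul]
    congr 1
    · -- Um.map C * scalar X * (star Um).map C = scalar X
      have hc : (C : ℂ →+* ℂ[X]).mapMatrix Um * Matrix.scalar (Fin ν) (X : ℂ[X])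
          = Matrix.scalar (Fin ν) (X : ℂ[X]) * (C : ℂ →+* ℂ[X]).mapMatrix Um :=
        (Matrix.scalar_commute (X : ℂ[X]) (fun r' => Commute.all _ _) _).symm
      rw [hc, Matrix.mul_assoc, ← hmap, hUU]
      simp
    · rw [hmap, hmap]
  unfold Matrix.charpoly
  rw [h1, Matrix.det_mul, Matrix.det_mul, mul_comm, ← mul_assoc, ← Matrix.det_mul,
    ← hmap, hUU']
  simp

lemma charmatrix_diagonal (d : Fin ν → ℂ) :
    charmatrix (Matrix.diagonal d) = Matrix.diagonal (fun i => (X : ℂ[X]) - C (d i)) := by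
  apply Matrix.ext
  intro i j
  by_cases h : i = j
  · subst h; simp
  · rw [charmatrix_apply_ne _ _ _ h, Matrix.diagonal_apply_ne _ h, Matrix.diagonal_apply_ne _ h]
    simp

lemma charpoly_diagonal (d : Fin ν → ℂ) :
    (Matrix.diagonal d).charpoly = ∏ i, ((X : ℂ[X]) - C (d i)) := by
  unfold Matrix.charpoly
  rw [charmatrix_diagonal, Matrix.det_diagonal]

lemma charpoly_eq_prod {A : Matrix (Fin ν) (Fin ν) ℂ} (hA : A.IsHermitian) :
    A.charpoly = ∏ i, ((X : ℂ[X]) - C ((hA.eigenvalues i : ℝ) : ℂ)) := by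
  conv_lhs => rw [hA.spectral_theorem, Unitary.conjStarAlgAut_apply]
  rw [charpoly_conj_unitary, charpoly_diagonal]
  rfl

lemma charpoly_eq_prod_sorted {A : Matrix (Fin ν) (Fin ν) ℂ} (hA : A.IsHermitian) :
    A.charpoly = ∏ i, ((X : ℂ[X]) - C ((sortedEig hA i : ℝ) : ℂ)) := by
  rw [charpoly_eq_prod hA, ← Equiv.prod_comp (Tuple.sort hA.eigenvalues)
    (fun i => (X : ℂ[X]) - C ((hA.eigenvalues i : ℝ) : ℂ))]
  rfl

lemma monotone_unique {p q : Fin ν → ℝ} (hp : Monotone p) (hq : Monotone q)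
    (h : (∏ i, ((X : ℂ[X]) - C ((p i : ℝ) : ℂ))) = ∏ i, ((X : ℂ[X]) - C ((q i : ℝ) : ℂ))) :
    p = q := by
  have key : ∀ f : Fin ν → ℝ, (∏ i, ((X : ℂ[X]) - C ((f i : ℝ) : ℂ)))
      = ((Finset.univ.val.map (fun i => ((f i : ℝ) : ℂ))).map (fun a => (X : ℂ[X]) - C a)).prod := by
    intro f
    rw [Multiset.map_map]
    rfl
  have h2 : (Finset.univ.val.map (fun i => ((p i : ℝ) : ℂ)))
      = (Finset.univ.val.map (fun i => ((q i : ℝ) : ℂ))) := by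
    have := congrArg Polynomial.roots h
    rwa [key p, key q, Polynomial.roots_multiset_prod_X_sub_C,
      Polynomial.roots_multiset_prod_X_sub_C] at this
  have h3 : Finset.univ.val.map p = Finset.univ.val.map q := by
    have : Multiset.map (fun x : ℝ => (x : ℂ)) (Finset.univ.val.map p)
        = Multiset.map (fun x : ℝ => (x : ℂ)) (Finset.univ.val.map q) := by
      rw [Multiset.map_map, Multiset.map_map]; exact h2
    exact Multiset.map_injective (fun a b => by exact_mod_cast id) this
  -- turn into lists
  have huniv : (Finset.univ : Finset (Fin ν)).val = ↑(List.finRange ν) := rfl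
  rw [huniv] at h3
  have hperm : (List.ofFn p).Perm (List.ofFn q) := by
    rw [List.ofFn_eq_map, List.ofFn_eq_map, ← Multiset.coe_eq_coe]
    simpa using h3
  have := List.Perm.eq_of_sortedLE
    (List.sortedLE_ofFn_iff.mpr hp) (List.sortedLE_ofFn_iff.mpr hq) hperm
  exact List.ofFn_injective this

end BandAux

namespace BandAux
variable {ν : ℕ}

lemma eigen_smul {A : Matrix (Fin ν) (Fin ν) ℂ} (hA : A.IsHermitian) (i : Fin ν) :
    Matrix.toEuclideanLin A (hA.eigenvectorBasis i)
      = (hA.eigenvalues i : ℂ) • hA.eigenvectorBasis i := by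
  apply (WithLp.equiv 2 (Fin ν → ℂ)).injective
  simp only [WithLp.equiv_apply, Matrix.ofLp_toEuclideanLin_apply]
  have := hA.mulVec_eigenvectorBasis i
  simpa using this

lemma quadform_eq_sum {A : Matrix (Fin ν) (Fin ν) ℂ} (hA : A.IsHermitian)
    (x : EuclideanSpace ℂ (Fin ν)) :
    (⟪x, Matrix.toEuclideanLin A x⟫_ℂ).re
      = ∑ i, hA.eigenvalues i * ‖⟪hA.eigenvectorBasis i, x⟫_ℂ‖ ^ 2 := by
  set b := hA.eigenvectorBasis
  have hsym : (Matrix.toEuclideanLin A).IsSymmetric :=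
    (Matrix.isHermitian_iff_isSymmetric).mp hA
  have h1 : ⟪x, Matrix.toEuclideanLin A x⟫_ℂ
      = ∑ i, ⟪x, b i⟫_ℂ * ⟪b i, Matrix.toEuclideanLin A x⟫_ℂ :=
    (b.sum_inner_mul_inner x _).symm
  have h2 : ∀ i, ⟪b i, Matrix.toEuclideanLin A x⟫_ℂ
      = (hA.eigenvalues i : ℂ) * ⟪b i, x⟫_ℂ := by
    intro i
    rw [← hsym (b i) x, eigen_smul hA i, inner_smul_left]
    simp [Complex.conj_ofReal, b]
  have h3 : ∀ i, ⟪x, b i⟫_ℂ * ⟪b i, x⟫_ℂ = ((‖⟪b i, x⟫_ℂ‖ ^ 2 : ℝ) : ℂ) := by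
    intro i
    rw [← inner_conj_symm x (b i), ← Complex.normSq_eq_conj_mul_self,
      Complex.normSq_eq_norm_sq]
  calc (⟪x, Matrix.toEuclideanLin A x⟫_ℂ).re
      = (∑ i, (hA.eigenvalues i : ℂ) * ((‖⟪b i, x⟫_ℂ‖ ^ 2 : ℝ) : ℂ)).re := by
        rw [h1]
        congr 1
        apply Finset.sum_congr rfl
        intro i _
        rw [h2 i, mul_left_comm, h3 i]
    _ = ∑ i, hA.eigenvalues i * ‖⟪b i, x⟫_ℂ‖ ^ 2 := by
        rw [Complex.re_sum]
        apply Finset.sum_congr rfl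
        intro i _
        rw [← Complex.ofReal_mul, Complex.ofReal_re]

lemma normsq_eq_sum {A : Matrix (Fin ν) (Fin ν) ℂ} (hA : A.IsHermitian)
    (x : EuclideanSpace ℂ (Fin ν)) :
    (⟪x, x⟫_ℂ).re = ∑ i, ‖⟪hA.eigenvectorBasis i, x⟫_ℂ‖ ^ 2 := by
  set b := hA.eigenvectorBasis
  have h1 : ⟪x, x⟫_ℂ = ∑ i, ⟪x, b i⟫_ℂ * ⟪b i, x⟫_ℂ := (b.sum_inner_mul_inner x x).symm
  have h3 : ∀ i, ⟪x, b i⟫_ℂ * ⟪b i, x⟫_ℂ = ((‖⟪b i, x⟫_ℂ‖ ^ 2 : ℝ) : ℂ) := by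
    intro i
    rw [← inner_conj_symm x (b i), ← Complex.normSq_eq_conj_mul_self,
      Complex.normSq_eq_norm_sq]
  rw [h1, Finset.sum_congr rfl (fun i _ => h3 i), Complex.re_sum]
  apply Finset.sum_congr rfl
  intro i _
  rw [Complex.ofReal_re]

lemma sortedEig_mono_of_quadform {A A' : Matrix (Fin ν) (Fin ν) ℂ}
    (hA : A.IsHermitian) (hA' : A'.IsHermitian)
    (hle : ∀ x : EuclideanSpace ℂ (Fin ν),
      (⟪x, Matrix.toEuclideanLin A x⟫_ℂ).re ≤ (⟪x, Matrix.toEuclideanLin A' x⟫_ℂ).re)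
    (n : Fin ν) : sortedEig hA n ≤ sortedEig hA' n := by
  classical
  set σ := Tuple.sort hA.eigenvalues
  set σ' := Tuple.sort hA'.eigenvalues
  set b := hA.eigenvectorBasis
  set b' := hA'.eigenvectorBasis
  set T₁ : Finset (Fin ν) := Finset.univ.filter (· < n)
  set T₂ : Finset (Fin ν) := Finset.univ.filter (n < ·)
  have hcard : T₁.card + T₂.card = ν - 1 := by
    rw [← Finset.card_union_of_disjoint]
    · have : T₁ ∪ T₂ = Finset.univ.filter (· ≠ n) := by
        ext k
        simp only [T₁, T₂, Finset.mem_union, Finset.mem_filter, Finset.mem_univ, true_and]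
        exact ne_iff_lt_or_gt.symm
      rw [this, Finset.filter_ne', Finset.card_erase_of_mem (Finset.mem_univ n)]
      simp
    · rw [Finset.disjoint_left]
      intro k h1 h2
      simp only [T₁, T₂, Finset.mem_filter] at h1 h2
      exact absurd (h1.2.trans h2.2) (lt_irrefl k)
  have hdim : Module.finrank ℂ ((T₁ → ℂ) × (T₂ → ℂ)) < Module.finrank ℂ (EuclideanSpace ℂ (Fin ν)) := by
    rw [Module.finrank_prod, Module.finrank_pi, Module.finrank_pi, finrank_euclideanSpace_fin,
      Fintype.card_coe, Fintype.card_coe, hcard]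
    exact Nat.sub_lt n.pos one_pos
  have hker : LinearMap.ker (LinearMap.prod
      (LinearMap.pi fun j : T₁ => (innerSL ℂ (b (σ j.1))).toLinearMap)
      (LinearMap.pi fun j : T₂ => (innerSL ℂ (b' (σ' j.1))).toLinearMap)) ≠ ⊥ :=
    LinearMap.ker_ne_bot_of_finrank_lt hdim
  obtain ⟨x, hxL, hx0⟩ := Submodule.exists_mem_ne_zero_of_ne_bot hker
  have hLx := LinearMap.mem_ker.mp hxL
  have hx1 : ∀ j : Fin ν, j < n → ⟪b (σ j), x⟫_ℂ = 0 := by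
    intro j hj
    have hmem : j ∈ T₁ := by
      simp only [T₁, Finset.mem_filter, Finset.mem_univ, true_and]
      exact hj
    have h := congrFun (congrArg Prod.fst hLx) ⟨j, hmem⟩
    simp only [LinearMap.prod_apply, Pi.prod, LinearMap.pi_apply,
      ContinuousLinearMap.coe_coe, innerSL_apply_apply, Prod.fst_zero, Pi.zero_apply] at h
    exact h
  have hx2 : ∀ j : Fin ν, n < j → ⟪b' (σ' j), x⟫_ℂ = 0 := by
    intro j hj
    have hmem : j ∈ T₂ := by
      simp only [T₂, Finset.mem_filter, Finset.mem_univ, true_and]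
      exact hj
    have h := congrFun (congrArg Prod.snd hLx) ⟨j, hmem⟩
    simp only [LinearMap.prod_apply, Pi.prod, LinearMap.pi_apply,
      ContinuousLinearMap.coe_coe, innerSL_apply_apply, Prod.snd_zero, Pi.zero_apply] at h
    exact h
  -- quadratic forms
  set N : ℝ := (⟪x, x⟫_ℂ).re with hN
  have hNpos : 0 < N := by
    rw [hN, normsq_eq_sum hA x]
    have hex : ∃ i, ⟪b i, x⟫_ℂ ≠ 0 := by
      by_contra hc
      push_neg at hc
      apply hx0
      have hrz : b.repr x = 0 := by
        ext i
        rw [b.repr_apply_apply]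
        simpa using hc i
      simpa using (b.repr.map_eq_zero_iff).mp hrz
    obtain ⟨i, hi⟩ := hex
    have hterm : (0:ℝ) < ‖⟪b i, x⟫_ℂ‖ ^ 2 := pow_pos (norm_pos_iff.mpr hi) 2
    exact Finset.sum_pos' (fun j _ => by positivity) ⟨i, Finset.mem_univ i, hterm⟩
  have hlow : sortedEig hA n * N ≤ (⟪x, Matrix.toEuclideanLin A x⟫_ℂ).re := by
    rw [quadform_eq_sum hA x, hN, normsq_eq_sum hA x,
      ← Equiv.sum_comp σ (fun i => hA.eigenvalues i * ‖⟪b i, x⟫_ℂ‖ ^ 2),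
      ← Equiv.sum_comp σ (fun i => ‖⟪b i, x⟫_ℂ‖ ^ 2), Finset.mul_sum]
    apply Finset.sum_le_sum
    intro j _
    by_cases hj : j < n
    · rw [hx1 j hj]
      simp
    · push_neg at hj
      have : sortedEig hA n ≤ hA.eigenvalues (σ j) := sortedEig_monotone hA hj
      exact mul_le_mul_of_nonneg_right this (by positivity)
  have hhigh : (⟪x, Matrix.toEuclideanLin A' x⟫_ℂ).re ≤ sortedEig hA' n * N := by
    rw [quadform_eq_sum hA' x, hN, normsq_eq_sum hA' x,
      ← Equiv.sum_comp σ' (fun i => hA'.eigenvalues i * ‖⟪b' i, x⟫_ℂ‖ ^ 2),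
      ← Equiv.sum_comp σ' (fun i => ‖⟪b' i, x⟫_ℂ‖ ^ 2), Finset.mul_sum]
    apply Finset.sum_le_sum
    intro j _
    by_cases hj : n < j
    · rw [hx2 j hj]
      simp
    · push_neg at hj
      have : hA'.eigenvalues (σ' j) ≤ sortedEig hA' n := sortedEig_monotone hA' hj
      exact mul_le_mul_of_nonneg_right this (by positivity)
  have := (hlow.trans (hle x)).trans hhigh
  exact le_of_mul_le_mul_right this hNpos

end BandAux


namespace BandAux

variable {d ν : ℕ} {E : Type*} [Fintype E] [DecidableEq E]

section Graph

variable (o t : E → Fin ν) (inv : E → E) (τ : E → Fin d → ℤ) (α : E → ℝ)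
  (mV : Fin ν → ℝ) (mA : E → ℝ) (S : Finset E)

/-- both orientations of the `S`-edges -/
def SSet : Finset E := S ∪ S.image inv

/-- the fluctuating part of the Laplacian -/
def Bmat (θ : Fin d → ℝ) : Matrix (Fin ν) (Fin ν) ℂ := fun v u =>
  -∑ e ∈ (SSet inv S).filter (fun e => o e = v ∧ t e = u),
      ((mA e / Real.sqrt (mV v * mV u) : ℝ) : ℂ)
        * Complex.exp (Complex.I * (edgePhase α τ θ e : ℝ))

/-- diagonal dominator -/
def Dr (v : Fin ν) : ℝ :=
  ∑ e ∈ (SSet inv S).filter (fun e => o e = v), mA e / Real.sqrt (mV (o e) * mV (t e))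

def Dmat : Matrix (Fin ν) (Fin ν) ℂ :=
  Matrix.diagonal (fun v => ((Dr o t inv mV mA S v : ℝ) : ℂ))

variable {inv S}

lemma mem_SSet {e : E} (hinv : ∀ e, inv (inv e) = e) :
    e ∈ SSet inv S ↔ e ∈ S ∨ inv e ∈ S := by
  unfold SSet
  simp only [Finset.mem_union, Finset.mem_image]
  constructor
  · rintro (h | ⟨a, ha, rfl⟩)
    · exact Or.inl h
    · exact Or.inr (by rwa [hinv])
  · rintro (h | h)
    · exact Or.inl h
    · exact Or.inr ⟨inv e, h, hinv e⟩

lemma inv_mem_SSet (hinv : ∀ e, inv (inv e) = e) {e : E} (he : e ∈ SSet inv S) :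
    inv e ∈ SSet inv S := by
  rw [mem_SSet hinv] at he ⊢
  rw [hinv]
  exact he.symm

end Graph

/-- collapsing a double fiberwise sum over edges -/
lemma sum_split {M : Type*} [AddCommMonoid M] (o t : E → Fin ν) (F : Finset E) (f : E → M) :
    ∑ v, ∑ u, ∑ e ∈ F.filter (fun e => o e = v ∧ t e = u), f e = ∑ e ∈ F, f e := by
  rw [← Finset.sum_fiberwise_of_maps_to (fun e (_ : e ∈ F) => Finset.mem_univ (o e)) f]
  refine Finset.sum_congr rfl fun v _ => ?_
  rw [← Finset.sum_fiberwise_of_maps_to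
    (fun e (_ : e ∈ F.filter (fun e => o e = v)) => Finset.mem_univ (t e)) f]
  refine Finset.sum_congr rfl fun u _ => ?_
  rw [Finset.filter_filter]

lemma sum_split1 {M : Type*} [AddCommMonoid M] (o : E → Fin ν) (F : Finset E) (f : E → M) :
    ∑ v, ∑ e ∈ F.filter (fun e => o e = v), f e = ∑ e ∈ F, f e :=
  Finset.sum_fiberwise_of_maps_to (fun e (_ : e ∈ F) => Finset.mem_univ (o e)) f

section Hyps

variable {o t : E → Fin ν} {inv : E → E} {τ : E → Fin d → ℤ} {α : E → ℝ}
  {mV : Fin ν → ℝ} {mA : E → ℝ} {S : Finset E}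
  (hinv : ∀ e, inv (inv e) = e)
  (ho : ∀ e, o (inv e) = t e) (ht : ∀ e, t (inv e) = o e)
  (hτ : ∀ e, τ (inv e) = - τ e) (hα : ∀ e, α (inv e) = - α e)
  (hmV : ∀ v, 0 < mV v) (hmA : ∀ e, 0 < mA e) (hmAinv : ∀ e, mA (inv e) = mA e)

include hτ hα in
lemma edgePhase_inv (θ : Fin d → ℝ) (e : E) :
    edgePhase α τ θ (inv e) = - edgePhase α τ θ e := by
  unfold edgePhase
  rw [hα e, hτ e]
  simp only [Pi.neg_apply, Int.cast_neg, neg_mul, Finset.sum_neg_distrib]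
  ring

lemma conj_exp_phase (φ : ℝ) :
    (starRingEnd ℂ) (Complex.exp (Complex.I * (φ : ℝ))) =
      Complex.exp (Complex.I * ((-φ : ℝ) : ℂ)) := by
  rw [← Complex.exp_conj]
  congr 1
  rw [RingHom.map_mul, Complex.conj_I, Complex.conj_ofReal]
  push_cast
  ring

include hinv ho ht hτ hα hmAinv in
/-- conjugating the edge sum swaps the entry indices, for any `inv`-invariant edge set. -/
lemma conj_edge_sum (F : Finset E) (hF : ∀ e ∈ F, inv e ∈ F) (θ : Fin d → ℝ) (i j : Fin ν) :
    (starRingEnd ℂ) (∑ e ∈ F.filter (fun e => o e = j ∧ t e = i),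
        ((mA e / Real.sqrt (mV j * mV i) : ℝ) : ℂ)
          * Complex.exp (Complex.I * (edgePhase α τ θ e : ℝ)))
      = ∑ e ∈ F.filter (fun e => o e = i ∧ t e = j),
        ((mA e / Real.sqrt (mV i * mV j) : ℝ) : ℂ)
          * Complex.exp (Complex.I * (edgePhase α τ θ e : ℝ)) := by
  rw [map_sum]
  refine Finset.sum_nbij' (fun e => inv e) (fun e => inv e) ?_ ?_ ?_ ?_ ?_
  · intro e he
    simp only [Finset.mem_filter] at he ⊢
    exact ⟨hF e he.1, by rw [ho, ht, he.2.1, he.2.2]; exact ⟨rfl, rfl⟩⟩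
  · intro e he
    simp only [Finset.mem_filter] at he ⊢
    exact ⟨hF e he.1, by rw [ho, ht, he.2.1, he.2.2]; exact ⟨rfl, rfl⟩⟩
  · intro e _; exact hinv e
  · intro e _; exact hinv e
  · intro e he
    rw [RingHom.map_mul, conj_exp_phase, Complex.conj_ofReal, hmAinv,
      edgePhase_inv hτ hα]
    have h1 : Real.sqrt (mV j * mV i) = Real.sqrt (mV i * mV j) := by rw [mul_comm]
    rw [h1]

include hinv ho ht hτ hα hmAinv in
lemma Bmat_isHermitian (θ : Fin d → ℝ) : (Bmat o t inv τ α mV mA S θ).IsHermitian := by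
  rw [Matrix.IsHermitian]
  ext i j
  rw [Matrix.conjTranspose_apply, Bmat, Bmat, star_neg]
  exact congrArg Neg.neg
    (conj_edge_sum hinv ho ht hτ hα hmAinv _ (fun e he => inv_mem_SSet hinv he) θ i j)

end Hyps

end BandAux

namespace BandAux

variable {d ν : ℕ} {E : Type*} [Fintype E] [DecidableEq E]

section Hyps2

variable {o t : E → Fin ν} {inv : E → E} {τ : E → Fin d → ℤ} {α : E → ℝ}
  {mV : Fin ν → ℝ} {mA : E → ℝ} {S : Finset E}
  (hinv : ∀ e, inv (inv e) = e)
  (ho : ∀ e, o (inv e) = t e) (ht : ∀ e, t (inv e) = o e)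
  (hmV : ∀ v, 0 < mV v) (hmA : ∀ e, 0 < mA e) (hmAinv : ∀ e, mA (inv e) = mA e)

/-- the weight function on edges. -/
def w (o t : E → Fin ν) (mV : Fin ν → ℝ) (mA : E → ℝ) (e : E) : ℝ :=
  mA e / Real.sqrt (mV (o e) * mV (t e))

include hmA in
lemma w_nonneg (e : E) : 0 ≤ w o t mV mA e :=
  div_nonneg (hmA e).le (Real.sqrt_nonneg _)

include hinv ho ht hmAinv in
lemma w_inv (e : E) : w o t mV mA (inv e) = w o t mV mA e := by
  unfold w
  rw [hmAinv, ho, ht, mul_comm]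

include hinv ho ht hmAinv in
lemma sum_swap_ot (g : Fin ν → ℝ) :
    ∑ e ∈ SSet inv S, w o t mV mA e * g (t e) = ∑ e ∈ SSet inv S, w o t mV mA e * g (o e) := by
  refine Finset.sum_nbij' (fun e => inv e) (fun e => inv e)
    (fun e he => inv_mem_SSet hinv he) (fun e he => inv_mem_SSet hinv he)
    (fun e _ => hinv e) (fun e _ => hinv e) ?_
  intro e he
  rw [w_inv hinv ho ht hmAinv, ho]

lemma qB_eq (θ : Fin d → ℝ) (x : Fin ν → ℂ) :
    star x ⬝ᵥ (Bmat o t inv τ α mV mA S θ *ᵥ x)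
      = -∑ e ∈ SSet inv S, ((w o t mV mA e : ℝ) : ℂ)
          * Complex.exp (Complex.I * (edgePhase α τ θ e : ℝ))
          * (star (x (o e)) * x (t e)) := by
  calc star x ⬝ᵥ (Bmat o t inv τ α mV mA S θ *ᵥ x)
      = ∑ v, ∑ u, star (x v) * (Bmat o t inv τ α mV mA S θ v u * x u) := by
        simp only [dotProduct, Matrix.mulVec, Pi.star_apply, Finset.mul_sum]
    _ = ∑ v, ∑ u, ∑ e ∈ (SSet inv S).filter (fun e => o e = v ∧ t e = u),
          -(((w o t mV mA e : ℝ) : ℂ) * Complex.exp (Complex.I * (edgePhase α τ θ e : ℝ))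
            * (star (x (o e)) * x (t e))) := by
        refine Finset.sum_congr rfl fun v _ => Finset.sum_congr rfl fun u _ => ?_
        rw [Bmat, neg_mul, mul_neg, Finset.sum_mul, Finset.mul_sum, ← Finset.sum_neg_distrib]
        refine Finset.sum_congr rfl fun e he => ?_
        simp only [Finset.mem_filter] at he
        obtain ⟨-, h1, h2⟩ := he
        subst h1; subst h2
        unfold w
        ring
    _ = ∑ e ∈ SSet inv S,
          -(((w o t mV mA e : ℝ) : ℂ) * Complex.exp (Complex.I * (edgePhase α τ θ e : ℝ))
            * (star (x (o e)) * x (t e))) := sum_split o t _ _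
    _ = -∑ e ∈ SSet inv S, ((w o t mV mA e : ℝ) : ℂ)
          * Complex.exp (Complex.I * (edgePhase α τ θ e : ℝ))
          * (star (x (o e)) * x (t e)) := by rw [Finset.sum_neg_distrib]

lemma star_mul_self_eq (z : ℂ) : star z * z = ((‖z‖ ^ 2 : ℝ) : ℂ) := by
  have : (starRingEnd ℂ) z * z = ((‖z‖ ^ 2 : ℝ) : ℂ) := by
    rw [← Complex.normSq_eq_conj_mul_self, Complex.normSq_eq_norm_sq]
  exact this

lemma qD_re (x : Fin ν → ℂ) :
    (star x ⬝ᵥ (Dmat o t inv mV mA S *ᵥ x)).re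
      = ∑ e ∈ SSet inv S, w o t mV mA e * ‖x (o e)‖ ^ 2 := by
  have step1 : star x ⬝ᵥ (Dmat o t inv mV mA S *ᵥ x)
      = ∑ v, ((Dr o t inv mV mA S v : ℝ) : ℂ) * ((‖x v‖ ^ 2 : ℝ) : ℂ) := by
    unfold Dmat
    simp only [dotProduct, Matrix.mulVec_diagonal, Pi.star_apply]
    refine Finset.sum_congr rfl fun v _ => ?_
    rw [← star_mul_self_eq]
    ring
  rw [step1, Complex.re_sum]
  have step2 : ∀ v, ((((Dr o t inv mV mA S v : ℝ) : ℂ)) * ((‖x v‖ ^ 2 : ℝ) : ℂ)).re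
      = Dr o t inv mV mA S v * ‖x v‖ ^ 2 := by
    intro v
    rw [← Complex.ofReal_mul, Complex.ofReal_re]
  rw [Finset.sum_congr rfl fun v _ => step2 v]
  have step3 : ∀ v, Dr o t inv mV mA S v * ‖x v‖ ^ 2
      = ∑ e ∈ (SSet inv S).filter (fun e => o e = v), w o t mV mA e * ‖x (o e)‖ ^ 2 := by
    intro v
    rw [Dr, Finset.sum_mul]
    refine Finset.sum_congr rfl fun e he => ?_
    simp only [Finset.mem_filter] at he
    rw [← he.2]
    rfl
  rw [Finset.sum_congr rfl fun v _ => step3 v, sum_split1]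

include hinv ho ht hmV hmA hmAinv in
lemma qB_re_abs_le (θ : Fin d → ℝ) (x : Fin ν → ℂ) :
    |(star x ⬝ᵥ (Bmat o t inv τ α mV mA S θ *ᵥ x)).re|
      ≤ (star x ⬝ᵥ (Dmat o t inv mV mA S *ᵥ x)).re := by
  rw [qB_eq, qD_re]
  have hnorm : ∀ e, ‖((w o t mV mA e : ℝ) : ℂ)
      * Complex.exp (Complex.I * (edgePhase α τ θ e : ℝ))
      * (star (x (o e)) * x (t e))‖ = w o t mV mA e * (‖x (o e)‖ * ‖x (t e)‖) := by
    intro e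
    rw [norm_mul, norm_mul, norm_mul, norm_star]
    have h1 : ‖((w o t mV mA e : ℝ) : ℂ)‖ = w o t mV mA e := by
      rw [Complex.norm_real, Real.norm_eq_abs, abs_of_nonneg (w_nonneg hmA e)]
    have h2 : ‖Complex.exp (Complex.I * (edgePhase α τ θ e : ℝ))‖ = 1 := by
      rw [Complex.norm_exp]
      simp
    rw [h1, h2, mul_one]
  have habs : |(-∑ e ∈ SSet inv S, ((w o t mV mA e : ℝ) : ℂ)
      * Complex.exp (Complex.I * (edgePhase α τ θ e : ℝ))
      * (star (x (o e)) * x (t e))).re|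
      ≤ ∑ e ∈ SSet inv S, w o t mV mA e * (‖x (o e)‖ * ‖x (t e)‖) := by
    rw [Complex.neg_re, abs_neg, Complex.re_sum]
    refine (Finset.abs_sum_le_sum_abs _ _).trans ?_
    refine Finset.sum_le_sum fun e _ => ?_
    rw [← hnorm e]
    exact (Complex.abs_re_le_norm _)
  refine habs.trans ?_
  have hsum2 : ∑ e ∈ SSet inv S, w o t mV mA e * (‖x (o e)‖ * ‖x (t e)‖)
      ≤ ∑ e ∈ SSet inv S, w o t mV mA e * ((‖x (o e)‖ ^ 2 + ‖x (t e)‖ ^ 2) / 2) := by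
    refine Finset.sum_le_sum fun e _ => ?_
    refine mul_le_mul_of_nonneg_left ?_ (w_nonneg hmA e)
    nlinarith [sq_nonneg (‖x (o e)‖ - ‖x (t e)‖)]
  refine hsum2.trans ?_
  have hsplit : ∑ e ∈ SSet inv S, w o t mV mA e * ((‖x (o e)‖ ^ 2 + ‖x (t e)‖ ^ 2) / 2)
      = (∑ e ∈ SSet inv S, w o t mV mA e * ‖x (o e)‖ ^ 2
        + ∑ e ∈ SSet inv S, w o t mV mA e * ‖x (t e)‖ ^ 2) / 2 := by
    rw [← Finset.sum_add_distrib, Finset.sum_div]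
    exact Finset.sum_congr rfl fun e _ => by ring
  rw [hsplit, sum_swap_ot hinv ho ht hmAinv (fun v => ‖x v‖ ^ 2)]
  linarith

end Hyps2

end BandAux

namespace BandAux

section Hyps3

variable {d ν : ℕ} {E : Type*} [Fintype E] [DecidableEq E]
  {o t : E → Fin ν} {inv : E → E} {τ : E → Fin d → ℤ} {α : E → ℝ}
  {mV : Fin ν → ℝ} {mA : E → ℝ} {S : Finset E} {Q : Fin ν → ℝ}
  (hinv : ∀ e, inv (inv e) = e)
  (ho : ∀ e, o (inv e) = t e) (ht : ∀ e, t (inv e) = o e)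
  (hτ : ∀ e, τ (inv e) = - τ e) (hα : ∀ e, α (inv e) = - α e)
  (hmV : ∀ v, 0 < mV v) (hmA : ∀ e, 0 < mA e) (hmAinv : ∀ e, mA (inv e) = mA e)
  (hout : ∀ e, e ∉ S → inv e ∉ S → α e = 0 ∧ τ e = 0)

include hinv ho ht hτ hα hmAinv in
lemma H_isHermitian (θ : Fin d → ℝ) :
    (wFiberLap o t τ α mV mA θ + Matrix.diagonal (fun v => ((Q v : ℝ) : ℂ))).IsHermitian := by
  rw [Matrix.IsHermitian]
  ext i j
  rw [Matrix.conjTranspose_apply, Matrix.add_apply, Matrix.add_apply]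
  simp only [wFiberLap]
  rw [star_add, star_sub]
  congr 1
  · congr 1
    · by_cases h : i = j
      · subst h
        simp [Complex.conj_ofReal]
      · simp [h, Ne.symm h]
    · exact conj_edge_sum hinv ho ht hτ hα hmAinv Finset.univ
        (fun e _ => Finset.mem_univ _) θ i j
  · by_cases h : i = j
    · subst h
      simp [Matrix.diagonal_apply_eq, Complex.conj_ofReal]
    · rw [Matrix.diagonal_apply_ne _ (Ne.symm h), Matrix.diagonal_apply_ne _ h]
      simp

lemma Dmat_isHermitian : (Dmat o t inv mV mA S).IsHermitian := by
  rw [Matrix.IsHermitian, Dmat, Matrix.diagonal_conjTranspose]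
  have hst : star (fun v => ((Dr o t inv mV mA S v : ℝ) : ℂ))
      = fun v => ((Dr o t inv mV mA S v : ℝ) : ℂ) := by
    funext v
    rw [Pi.star_apply]
    exact Complex.conj_ofReal _
  rw [hst]

include hout hinv in
lemma decomp (θ θ' : Fin d → ℝ) :
    wFiberLap o t τ α mV mA θ - Bmat o t inv τ α mV mA S θ
      = wFiberLap o t τ α mV mA θ' - Bmat o t inv τ α mV mA S θ' := by
  ext i j
  simp only [Matrix.sub_apply, wFiberLap, Bmat]
  have key : ∀ θ₀ : Fin d → ℝ,
      (∑ e ∈ Finset.univ.filter (fun e => o e = i ∧ t e = j),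
          ((mA e / Real.sqrt (mV i * mV j) : ℝ) : ℂ)
            * Complex.exp (Complex.I * (edgePhase α τ θ₀ e : ℝ)))
        - ∑ e ∈ (SSet inv S).filter (fun e => o e = i ∧ t e = j),
          ((mA e / Real.sqrt (mV i * mV j) : ℝ) : ℂ)
            * Complex.exp (Complex.I * (edgePhase α τ θ₀ e : ℝ))
      = ∑ e ∈ Finset.univ.filter (fun e => o e = i ∧ t e = j)
            \ (SSet inv S).filter (fun e => o e = i ∧ t e = j),
          ((mA e / Real.sqrt (mV i * mV j) : ℝ) : ℂ) := by
    intro θ₀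
    have hsub : (SSet inv S).filter (fun e => o e = i ∧ t e = j)
        ⊆ Finset.univ.filter (fun e => o e = i ∧ t e = j) :=
      Finset.filter_subset_filter _ (Finset.subset_univ _)
    rw [← Finset.sum_sdiff hsub, add_sub_cancel_right]
    refine Finset.sum_congr rfl fun e he => ?_
    simp only [Finset.mem_sdiff, Finset.mem_filter, Finset.mem_univ, true_and] at he
    have henot : e ∉ SSet inv S := fun hc => he.2 ⟨hc, he.1⟩
    rw [mem_SSet hinv] at henot
    push_neg at henot
    obtain ⟨hα0, hτ0⟩ := hout e henot.1 henot.2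
    have hph : edgePhase α τ θ₀ e = 0 := by
      unfold edgePhase
      rw [hα0, hτ0]
      simp
    rw [hph]
    simp
  linear_combination (key θ') - (key θ)

include hinv ho ht hmV hmA hmAinv in
lemma quad_add_nonneg (θ : Fin d → ℝ) (x : Fin ν → ℂ) :
    0 ≤ (star x ⬝ᵥ ((Dmat o t inv mV mA S + Bmat o t inv τ α mV mA S θ) *ᵥ x)).re := by
  rw [Matrix.add_mulVec, dotProduct_add, Complex.add_re]
  have := qB_re_abs_le hinv ho ht hmV hmA hmAinv (S := S) (τ := τ) (α := α) θ x
  have h := abs_le.mp this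
  linarith [h.1]

include hinv ho ht hmV hmA hmAinv in
lemma quad_sub_nonneg (θ : Fin d → ℝ) (x : Fin ν → ℂ) :
    0 ≤ (star x ⬝ᵥ ((Dmat o t inv mV mA S - Bmat o t inv τ α mV mA S θ) *ᵥ x)).re := by
  rw [Matrix.sub_mulVec, dotProduct_sub, Complex.sub_re]
  have := qB_re_abs_le hinv ho ht hmV hmA hmAinv (S := S) (τ := τ) (α := α) θ x
  have h := abs_le.mp this
  linarith [h.2]

end Hyps3

/-- bridge from dot-product positivity to Euclidean inner products -/
lemma inner_mono_of_dot {ν : ℕ} (A A' : Matrix (Fin ν) (Fin ν) ℂ)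
    (h : ∀ x : Fin ν → ℂ, 0 ≤ (star x ⬝ᵥ ((A' - A) *ᵥ x)).re) :
    ∀ x : EuclideanSpace ℂ (Fin ν),
      (⟪x, Matrix.toEuclideanLin A x⟫_ℂ).re ≤ (⟪x, Matrix.toEuclideanLin A' x⟫_ℂ).re := by
  intro x
  have hx := h ((WithLp.equiv 2 (Fin ν → ℂ)) x)
  rw [Matrix.sub_mulVec, dotProduct_sub, Complex.sub_re] at hx
  have e1 : ⟪x, Matrix.toEuclideanLin A x⟫_ℂ
      = star ((WithLp.equiv 2 (Fin ν → ℂ)) x) ⬝ᵥ (A *ᵥ (WithLp.equiv 2 (Fin ν → ℂ)) x) := by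
    rw [EuclideanSpace.inner_eq_star_dotProduct, dotProduct_comm]
    rfl
  have e2 : ⟪x, Matrix.toEuclideanLin A' x⟫_ℂ
      = star ((WithLp.equiv 2 (Fin ν → ℂ)) x) ⬝ᵥ (A' *ᵥ (WithLp.equiv 2 (Fin ν → ℂ)) x) := by
    rw [EuclideanSpace.inner_eq_star_dotProduct, dotProduct_comm]
    rfl
  rw [e1, e2]
  linarith

/-- real part of the trace from a real-rooted characteristic polynomial -/
lemma trace_re_of_charpoly {ν : ℕ} (A : Matrix (Fin ν) (Fin ν) ℂ) (f : Fin ν → ℝ)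
    (h : A.charpoly = ∏ n, ((X : ℂ[X]) - C ((f n : ℝ) : ℂ))) :
    A.trace.re = ∑ n, f n := by
  have htr : A.trace = (Matrix.charpoly A).roots.sum :=
    A.trace_eq_sum_roots_charpoly
  have key : (∏ i, ((X : ℂ[X]) - C ((f i : ℝ) : ℂ)))
      = ((Finset.univ.val.map (fun i => ((f i : ℝ) : ℂ))).map
          (fun a => (X : ℂ[X]) - C a)).prod := by
    rw [Multiset.map_map]
    rfl
  rw [h, key, Polynomial.roots_multiset_prod_X_sub_C] at htr
  have : (Finset.univ.val.map (fun i => ((f i : ℝ) : ℂ))).sum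
      = ∑ i, ((f i : ℝ) : ℂ) := rfl
  rw [htr, this, Complex.re_sum]
  exact Finset.sum_congr rfl fun i _ => Complex.ofReal_re _

end BandAux

theorem weighted_band_sum_le_two_betti
    {d ν : ℕ} (hd : 1 ≤ d) (hν : 1 ≤ ν)
    {E : Type*} [Fintype E] [DecidableEq E]
    (o t : E → Fin ν) (inv : E → E)
    (hinv : ∀ e, inv (inv e) = e) (hfpf : ∀ e, inv e ≠ e)
    (ho : ∀ e, o (inv e) = t e) (ht : ∀ e, t (inv e) = o e)
    (τ : E → Fin d → ℤ) (hτ : ∀ e, τ (inv e) = - τ e)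
    (α : E → ℝ) (hα : ∀ e, α (inv e) = - α e)
    (mV : Fin ν → ℝ) (hmV : ∀ v, 0 < mV v)
    (mA : E → ℝ) (hmA : ∀ e, 0 < mA e) (hmAinv : ∀ e, mA (inv e) = mA e)
    (S : Finset E) (hS : ∀ e ∈ S, inv e ∉ S)
    (hout : ∀ e, e ∉ S → inv e ∉ S → α e = 0 ∧ τ e = 0)
    (Q : Fin ν → ℝ)
    -- `lam θ` enumerates the eigenvalues of `M(θ) + diag Q` with multiplicity, increasing
    (lam : (Fin d → ℝ) → Fin ν → ℝ)
    (hmono : ∀ θ, Monotone (lam θ))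
    (hroots : ∀ θ, (wFiberLap o t τ α mV mA θ
        + Matrix.diagonal (fun v => (Q v : ℂ))).charpoly
      = ∏ n : Fin ν, (X - C ((lam θ n : ℝ) : ℂ)))
    (betti : ℝ)
    (hbetti : betti = ∑ e ∈ S ∪ S.image inv,
        mA e / Real.sqrt (mV (o e) * mV (t e))) :
    (∑ n : Fin ν,
        ((⨆ θ : Fin d → ℝ, lam θ n) - (⨅ θ : Fin d → ℝ, lam θ n)) ≤ 2 * betti)
    ∧ MeasureTheory.volume
        (⋃ n : Fin ν,
          Set.Icc (⨅ θ : Fin d → ℝ, lam θ n) (⨆ θ : Fin d → ℝ, lam θ n))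
      ≤ ENNReal.ofReal (2 * betti) := by
  classical
  -- abbreviations
  set H : (Fin d → ℝ) → Matrix (Fin ν) (Fin ν) ℂ :=
    fun θ => wFiberLap o t τ α mV mA θ + Matrix.diagonal (fun v => (Q v : ℂ)) with hHdef
  set B : (Fin d → ℝ) → Matrix (Fin ν) (Fin ν) ℂ :=
    fun θ => BandAux.Bmat o t inv τ α mV mA S θ with hBdef
  set D : Matrix (Fin ν) (Fin ν) ℂ := BandAux.Dmat o t inv mV mA S with hDdef
  have hH : ∀ θ, (H θ).IsHermitian := fun θ =>
    BandAux.H_isHermitian hinv ho ht hτ hα hmAinv θ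
  have hBh : ∀ θ, (B θ).IsHermitian := fun θ =>
    BandAux.Bmat_isHermitian hinv ho ht hτ hα hmAinv θ
  have hDh : D.IsHermitian := BandAux.Dmat_isHermitian
  have hMph : (H 0 - B 0 + D).IsHermitian := ((hH 0).sub (hBh 0)).add hDh
  have hMmh : (H 0 - B 0 - D).IsHermitian := ((hH 0).sub (hBh 0)).sub hDh
  -- decomposition `H θ = (H 0 - B 0) + B θ`
  have hdec : ∀ θ, H θ = (H 0 - B 0) + B θ := by
    intro θ
    have h := BandAux.decomp (o := o) (t := t) (mV := mV) (mA := mA)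
      hinv hout θ (0 : Fin d → ℝ)
    have h2 : H θ - B θ = H 0 - B 0 := by
      calc H θ - B θ = (wFiberLap o t τ α mV mA θ - BandAux.Bmat o t inv τ α mV mA S θ)
            + Matrix.diagonal (fun v => (Q v : ℂ)) := by rw [hHdef, hBdef]; beta_reduce; abel
        _ = (wFiberLap o t τ α mV mA 0 - BandAux.Bmat o t inv τ α mV mA S 0)
            + Matrix.diagonal (fun v => (Q v : ℂ)) := by rw [h]
        _ = H 0 - B 0 := by rw [hHdef, hBdef]; beta_reduce; abel
    calc H θ = (H θ - B θ) + B θ := by abel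
      _ = (H 0 - B 0) + B θ := by rw [h2]
  -- eigenvalue identification
  have hlam : ∀ θ, lam θ = BandAux.sortedEig (hH θ) := fun θ =>
    BandAux.monotone_unique (hmono θ) (BandAux.sortedEig_monotone _)
      ((hroots θ).symm.trans (BandAux.charpoly_eq_prod_sorted (hH θ)))
  -- eigenvalue comparisons
  have hub : ∀ θ n, lam θ n ≤ BandAux.sortedEig hMph n := by
    intro θ n
    rw [hlam θ]
    refine BandAux.sortedEig_mono_of_quadform (hH θ) hMph ?_ n
    refine BandAux.inner_mono_of_dot _ _ ?_
    intro x
    have hq := BandAux.quad_sub_nonneg (τ := τ) (α := α) (S := S)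
      hinv ho ht hmV hmA hmAinv θ x
    have hEq : H 0 - B 0 + D - H θ = D - B θ := by rw [hdec θ]; abel
    rw [hEq]
    exact hq
  have hlb : ∀ θ n, BandAux.sortedEig hMmh n ≤ lam θ n := by
    intro θ n
    rw [hlam θ]
    refine BandAux.sortedEig_mono_of_quadform hMmh (hH θ) ?_ n
    refine BandAux.inner_mono_of_dot _ _ ?_
    intro x
    have hq := BandAux.quad_add_nonneg (τ := τ) (α := α) (S := S)
      hinv ho ht hmV hmA hmAinv θ x
    have hEq : H θ - (H 0 - B 0 - D) = D + B θ := by rw [hdec θ]; abel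
    rw [hEq]
    exact hq
  -- sup and inf bounds
  have hBddA : ∀ n, BddAbove (Set.range fun θ => lam θ n) := fun n =>
    ⟨BandAux.sortedEig hMph n, by rintro y ⟨θ, rfl⟩; exact hub θ n⟩
  have hBddB : ∀ n, BddBelow (Set.range fun θ => lam θ n) := fun n =>
    ⟨BandAux.sortedEig hMmh n, by rintro y ⟨θ, rfl⟩; exact hlb θ n⟩
  have hsup : ∀ n, (⨆ θ, lam θ n) ≤ BandAux.sortedEig hMph n := fun n =>
    ciSup_le (fun θ => hub θ n)
  have hinf : ∀ n, BandAux.sortedEig hMmh n ≤ (⨅ θ, lam θ n) := fun n =>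
    le_ciInf (fun θ => hlb θ n)
  have his : ∀ n, (⨅ θ, lam θ n) ≤ (⨆ θ, lam θ n) := fun n =>
    (ciInf_le (hBddB n) (0 : Fin d → ℝ)).trans (le_ciSup (hBddA n) (0 : Fin d → ℝ))
  -- trace computation
  have htrp : (H 0 - B 0 + D).trace.re = ∑ n, BandAux.sortedEig hMph n :=
    BandAux.trace_re_of_charpoly _ _ (BandAux.charpoly_eq_prod_sorted hMph)
  have htrm : (H 0 - B 0 - D).trace.re = ∑ n, BandAux.sortedEig hMmh n :=
    BandAux.trace_re_of_charpoly _ _ (BandAux.charpoly_eq_prod_sorted hMmh)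
  have htrD : D.trace = ((betti : ℝ) : ℂ) := by
    rw [hDdef, BandAux.Dmat, Matrix.trace_diagonal, ← Complex.ofReal_sum]
    congr 1
    rw [hbetti]
    exact BandAux.sum_split1 o (BandAux.SSet inv S) _
  have hsum : ∑ n, (BandAux.sortedEig hMph n - BandAux.sortedEig hMmh n) = 2 * betti := by
    rw [Finset.sum_sub_distrib, ← htrp, ← htrm, ← Complex.sub_re, ← Matrix.trace_sub]
    have hMD : (H 0 - B 0 + D) - (H 0 - B 0 - D) = D + D := by abel
    rw [hMD, Matrix.trace_add, htrD, ← Complex.ofReal_add, Complex.ofReal_re]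
    ring
  have part1 : (∑ n : Fin ν,
      ((⨆ θ : Fin d → ℝ, lam θ n) - (⨅ θ : Fin d → ℝ, lam θ n))) ≤ 2 * betti := by
    calc ∑ n : Fin ν, ((⨆ θ, lam θ n) - (⨅ θ, lam θ n))
        ≤ ∑ n : Fin ν, (BandAux.sortedEig hMph n - BandAux.sortedEig hMmh n) :=
          Finset.sum_le_sum fun n _ => sub_le_sub (hsup n) (hinf n)
      _ = 2 * betti := hsum
  refine ⟨part1, ?_⟩
  calc MeasureTheory.volume (⋃ n : Fin ν,
        Set.Icc (⨅ θ : Fin d → ℝ, lam θ n) (⨆ θ : Fin d → ℝ, lam θ n))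
      ≤ ∑ n : Fin ν, MeasureTheory.volume
          (Set.Icc (⨅ θ : Fin d → ℝ, lam θ n) (⨆ θ : Fin d → ℝ, lam θ n)) :=
        MeasureTheory.measure_iUnion_fintype_le _ _
    _ = ∑ n : Fin ν, ENNReal.ofReal ((⨆ θ, lam θ n) - (⨅ θ, lam θ n)) := by
        simp [Real.volume_Icc]
    _ = ENNReal.ofReal (∑ n : Fin ν, ((⨆ θ, lam θ n) - (⨅ θ, lam θ n))) :=
        (ENNReal.ofReal_sum_of_nonneg fun n _ => sub_nonneg.mpr (his n)).symm
    _ ≤ ENNReal.ofReal (2 * betti) := ENNReal.ofReal_le_ofReal part1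

end
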